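/- In Euclidean geometry, the number of similarity types of triangles with all angles rational multiples of π admitting a representative whose side lengths each have degree at most d over ℚ is finite for every positive integer d. -/

import Mathlib

open Real Polynomial IntermediateField Module

set_option maxHeartbeats 1000000
set_option synthInstance.maxHeartbeats 1000000

/-! ### Totient lower bound: `n ≤ 2 * φ(n)²` -/

private lemma odd_le_totient_sq (n : ℕ) : Odd n → n ≤ n.totient ^ 2 := by
  induction n using Nat.recOnPosPrimePosCoprime with
  | prime_pow p k hp hk =>
    intro hodd
    have hp' := hp
    have hpe : ¬ Even p := fun he =>
      (Nat.not_even_iff_odd.mpr hodd) (Nat.even_pow.mpr ⟨he, hk.ne'⟩)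
    have h3 : 3 ≤ p := by
      have h2 := hp'.two_le
      rcases Nat.lt_or_ge p 3 with h | h
      · interval_cases p
        · exact absurd even_two hpe
      · exact h
    rw [Nat.totient_prime_pow hp' hk]
    obtain ⟨m, rfl⟩ : ∃ m, p = m + 3 := ⟨p - 3, by omega⟩
    have h1 : m + 3 ≤ (m + 3 - 1) ^ 2 := by
      have he : m + 3 - 1 = m + 2 := by omega
      rw [he]; nlinarith
    calc (m+3) ^ k ≤ (m+3) ^ (k - 1) * (m+3) := by
          rw [← pow_succ]; exact Nat.pow_le_pow_right hp'.pos (by omega)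
      _ ≤ ((m+3) ^ (k - 1)) ^ 2 * (m + 3 - 1) ^ 2 := by
          refine Nat.mul_le_mul ?_ h1
          exact Nat.le_self_pow two_ne_zero _
      _ = ((m+3) ^ (k - 1) * (m + 3 - 1)) ^ 2 := by ring
  | zero => intro h; simp at h
  | one => intro _; simp
  | coprime a b ha hb hab iha ihb =>
    intro hodd
    rw [Nat.totient_mul hab]
    have hoa : Odd a := (Nat.Odd.of_mul_left hodd)
    have hob : Odd b := (Nat.Odd.of_mul_right hodd)
    calc a * b ≤ a.totient ^ 2 * b.totient ^ 2 := Nat.mul_le_mul (iha hoa) (ihb hob)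
      _ = (a.totient * b.totient) ^ 2 := by ring

private lemma le_two_mul_totient_sq (n : ℕ) (hn : 0 < n) : n ≤ 2 * n.totient ^ 2 := by
  obtain ⟨k, m, hm2, rfl⟩ := Nat.exists_eq_pow_mul_and_not_dvd hn.ne' 2 (by norm_num)
  have hmodd : Odd m := Nat.odd_iff.mpr (by omega)
  have hm := odd_le_totient_sq m hmodd
  rcases Nat.eq_zero_or_pos k with rfl | hk
  · simpa using hm.trans (by omega)
  · have hcop : Nat.Coprime (2 ^ k) m := (Nat.coprime_two_left.mpr hmodd).pow_left _
    rw [Nat.totient_mul hcop, Nat.totient_prime_pow Nat.prime_two hk]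
    have hmpos : 0 < m := hmodd.pos
    have htpos : 0 < m.totient := Nat.totient_pos.mpr hmpos
    have key : 2 ^ k ≤ 2 * (2 ^ (k - 1)) ^ 2 := by
      have : 2 ^ k ≤ 2 ^ (2 * k - 1) := Nat.pow_le_pow_right (by norm_num) (by omega)
      calc 2 ^ k ≤ 2 ^ (2 * k - 1) := this
        _ = 2 * (2 ^ (k - 1)) ^ 2 := by
          rw [← pow_mul, ← pow_succ']
          congr 1; omega
    calc 2 ^ k * m ≤ (2 * (2 ^ (k - 1)) ^ 2) * m.totient ^ 2 := Nat.mul_le_mul key hm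
      _ = 2 * (2 ^ (k - 1) * (2 - 1) * m.totient) ^ 2 := by ring

/-! ### Degree of cosines of rational angles -/

private lemma totient_le_of_cos (q : ℚ) (hq0 : 0 < q)
    (hint : IsIntegral ℚ (Real.cos ((q : ℝ) * (2 * π)))) :
    Nat.totient q.den ≤ 2 * (minpoly ℚ (Real.cos ((q : ℝ) * (2 * π)))).natDegree := by
  set θ : ℝ := (q : ℝ) * (2 * π) with hθdef
  set m := q.den with hmdef
  have hm0 : m ≠ 0 := q.den_nz
  have hmpos : 0 < m := Nat.pos_of_ne_zero hm0
  have hnum : 0 ≤ q.num := (Rat.num_pos.mpr hq0).le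
  have hcop : Nat.Coprime q.num.toNat m := by
    have h2 : 0 < q.num := Rat.num_pos.mpr hq0
    have := q.reduced
    rwa [show q.num.natAbs = q.num.toNat by omega] at this
  have hprim0 := Complex.isPrimitiveRoot_exp_of_coprime q.num.toNat m hm0 hcop
  have hdiv : ((q.num.toNat : ℂ)) / (m : ℂ) = (q : ℂ) := by
    have h3 : (q.num.toNat : ℂ) = (q.num : ℂ) := by exact_mod_cast Int.toNat_of_nonneg hnum
    rw [Rat.cast_def, h3]
  have hζeq : Complex.exp (2 * π * Complex.I * ((q.num.toNat : ℂ) / (m : ℂ)))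
      = Complex.exp ((θ : ℂ) * Complex.I) := by
    rw [hdiv]; congr 1; push_cast [hθdef]; ring
  rw [hζeq] at hprim0
  set ζ : ℂ := Complex.exp ((θ : ℂ) * Complex.I) with hζdef
  have hζint : IsIntegral ℚ ζ := (hprim0.isIntegral hmpos).tower_top
  have hφdeg : (minpoly ℚ ζ).natDegree = Nat.totient m := by
    rw [← Polynomial.cyclotomic_eq_minpoly_rat hprim0 hmpos, Polynomial.natDegree_cyclotomic]
  set c : ℂ := ((Real.cos θ : ℝ) : ℂ) with hcdef
  have hquad : ζ ^ 2 - 2 * c * ζ + 1 = 0 := by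
    rw [hζdef, hcdef, Complex.ofReal_cos, Complex.cos]
    have h1 : Complex.exp (-(θ : ℂ) * Complex.I) * Complex.exp ((θ : ℂ) * Complex.I) = 1 := by
      rw [← Complex.exp_add]; ring_nf; exact Complex.exp_zero
    ring_nf; ring_nf at h1; linear_combination -h1
  have hcint : IsIntegral ℚ c := hint.map (IsScalarTower.toAlgHom ℚ ℝ ℂ)
  set K : IntermediateField ℚ ℂ := ℚ⟮c⟯ with hK
  haveI : FiniteDimensional ℚ K := adjoin.finiteDimensional hcint
  have hcmem : c ∈ K := mem_adjoin_simple_self ℚ c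
  set cK : K := ⟨c, hcmem⟩ with hcK
  set P : Polynomial K := X ^ 2 - C (2 * cK) * X + 1 with hP
  have hPmonic : P.Monic := by unfold P; monicity!
  have hPdeg : P.natDegree = 2 := by unfold P; compute_degree!
  have h2c : (algebraMap (↥K) ℂ) (2 * cK) = 2 * c := by
    rw [map_mul, map_ofNat]
    rfl
  have hPeval : Polynomial.aeval ζ P = 0 := by
    rw [hP, map_add, map_sub, map_mul, map_pow, aeval_X, aeval_C, map_one, h2c]
    exact hquad
  have hζKint : IsIntegral K ζ := ⟨P, hPmonic, hPeval⟩
  have hd2 : (minpoly K ζ).natDegree ≤ 2 := by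
    have h := minpoly.min K ζ hPmonic hPeval
    calc (minpoly K ζ).natDegree ≤ P.natDegree := natDegree_le_natDegree h
      _ = 2 := hPdeg
  haveI : FiniteDimensional K K⟮ζ⟯ := adjoin.finiteDimensional hζKint
  have hr2 : finrank K K⟮ζ⟯ ≤ 2 := by rw [adjoin.finrank hζKint]; exact hd2
  haveI : FiniteDimensional ℚ K⟮ζ⟯ := FiniteDimensional.trans ℚ K K⟮ζ⟯
  have htower : (finrank ℚ K) * (finrank K K⟮ζ⟯) = finrank ℚ K⟮ζ⟯ :=
    finrank_mul_finrank ℚ K K⟮ζ⟯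
  have hle : ℚ⟮ζ⟯ ≤ K⟮ζ⟯.restrictScalars ℚ := by
    rw [adjoin_le_iff]
    intro x hx
    rw [Set.mem_singleton_iff] at hx
    subst hx
    exact mem_adjoin_simple_self K ζ
  haveI : FiniteDimensional ℚ (K⟮ζ⟯.restrictScalars ℚ) := ‹FiniteDimensional ℚ K⟮ζ⟯›
  have hfr : finrank ℚ (K⟮ζ⟯.restrictScalars ℚ) = finrank ℚ K⟮ζ⟯ := rfl
  have h1 : finrank ℚ ℚ⟮ζ⟯ ≤ finrank ℚ K⟮ζ⟯ := by
    rw [← hfr]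
    haveI : Module.Finite ℚ (K⟮ζ⟯.restrictScalars ℚ).toSubalgebra.toSubmodule :=
      ‹FiniteDimensional ℚ (K⟮ζ⟯.restrictScalars ℚ)›
    exact Submodule.finrank_mono (show ℚ⟮ζ⟯.toSubalgebra.toSubmodule ≤
      (K⟮ζ⟯.restrictScalars ℚ).toSubalgebra.toSubmodule from hle)
  have h2 : finrank ℚ ℚ⟮ζ⟯ = Nat.totient m := by
    rw [adjoin.finrank hζint, hφdeg]
  have h3 : finrank ℚ K = (minpoly ℚ (Real.cos θ)).natDegree := by
    have hca : c = algebraMap ℝ ℂ (Real.cos θ) := rfl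
    rw [adjoin.finrank hcint, hca, minpoly.algebraMap_eq (algebraMap ℝ ℂ).injective]
  calc Nat.totient m = finrank ℚ ℚ⟮ζ⟯ := h2.symm
    _ ≤ finrank ℚ K⟮ζ⟯ := h1
    _ = finrank ℚ K * finrank K K⟮ζ⟯ := htower.symm
    _ ≤ (minpoly ℚ (Real.cos θ)).natDegree * 2 := by
        rw [h3] at *; exact Nat.mul_le_mul_left _ hr2
    _ = 2 * (minpoly ℚ (Real.cos θ)).natDegree := Nat.mul_comm _ _

/-! ### Degrees inside `ℚ(a,b,c)` -/

private lemma minpoly_deg_tower {F K L : Type*} [Field F] [Field K] [Field L]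
    [Algebra F K] [Algebra F L] [Algebra K L] [IsScalarTower F K L]
    {x : L} (hx : IsIntegral F x) :
    (minpoly K x).natDegree ≤ (minpoly F x).natDegree := by
  have h := minpoly.dvd_map_of_isScalarTower F K x
  have hne : (minpoly F x).map (algebraMap F K) ≠ 0 :=
    (Polynomial.map_ne_zero_iff (algebraMap F K).injective).mpr (minpoly.ne_zero hx)
  calc (minpoly K x).natDegree ≤ ((minpoly F x).map (algebraMap F K)).natDegree :=
        natDegree_le_of_dvd h hne
    _ = (minpoly F x).natDegree := natDegree_map _

private lemma exists_field (d : ℕ) (a b c : ℝ)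
    (ha : IsAlgebraic ℚ a) (hb : IsAlgebraic ℚ b) (hc : IsAlgebraic ℚ c)
    (hda : (minpoly ℚ a).natDegree ≤ d) (hdb : (minpoly ℚ b).natDegree ≤ d)
    (hdc : (minpoly ℚ c).natDegree ≤ d) :
    ∃ E : IntermediateField ℚ ℝ, a ∈ E ∧ b ∈ E ∧ c ∈ E ∧ FiniteDimensional ℚ E ∧
      finrank ℚ E ≤ d * d * d := by
  have ha' : IsIntegral ℚ a := ha.isIntegral
  have hb' : IsIntegral ℚ b := hb.isIntegral
  have hc' : IsIntegral ℚ c := hc.isIntegral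
  set A : IntermediateField ℚ ℝ := ℚ⟮a⟯ with hA
  haveI : FiniteDimensional ℚ A := adjoin.finiteDimensional ha'
  have hbA : IsIntegral A b := hb'.tower_top
  set B : IntermediateField A ℝ := A⟮b⟯ with hB
  haveI : FiniteDimensional A B := adjoin.finiteDimensional hbA
  have hcB : IsIntegral B c := hc'.tower_top
  set C : IntermediateField B ℝ := B⟮c⟯ with hC
  haveI : FiniteDimensional B C := adjoin.finiteDimensional hcB
  haveI : FiniteDimensional ℚ B := FiniteDimensional.trans ℚ A B
  haveI hFDC : FiniteDimensional ℚ C := FiniteDimensional.trans ℚ B C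
  refine ⟨(C.restrictScalars A).restrictScalars ℚ, ?_, ?_, ?_, ?_, ?_⟩
  · show a ∈ C
    have haB : a ∈ B :=
      IntermediateField.algebraMap_mem B (⟨a, mem_adjoin_simple_self ℚ a⟩ : A)
    exact IntermediateField.algebraMap_mem C (⟨a, haB⟩ : B)
  · show b ∈ C
    have hbB : b ∈ B := mem_adjoin_simple_self A b
    exact IntermediateField.algebraMap_mem C (⟨b, hbB⟩ : B)
  · show c ∈ C
    exact mem_adjoin_simple_self B c
  · exact hFDC
  · have e1 : finrank ℚ A ≤ d := by rwa [adjoin.finrank ha']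
    have e2 : finrank A B ≤ d := by
      rw [adjoin.finrank hbA]
      exact (minpoly_deg_tower hb').trans hdb
    have e3 : finrank B C ≤ d := by
      rw [adjoin.finrank hcB]
      exact (minpoly_deg_tower hc').trans hdc
    have t1 : finrank ℚ A * finrank A C = finrank ℚ C := finrank_mul_finrank ℚ A C
    have t2 : finrank A B * finrank B C = finrank A C := finrank_mul_finrank A B C
    show finrank ℚ C ≤ d * d * d
    calc finrank ℚ C = finrank ℚ A * (finrank A B * finrank B C) := by rw [t2, t1]
      _ ≤ d * (d * d) := Nat.mul_le_mul e1 (Nat.mul_le_mul e2 e3)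
      _ = d * d * d := by ring

private lemma deg_le_of_mem {E : IntermediateField ℚ ℝ} [FiniteDimensional ℚ E] {x : ℝ}
    (hx : x ∈ E) :
    IsIntegral ℚ x ∧ (minpoly ℚ x).natDegree ≤ finrank ℚ E := by
  have hxi : IsIntegral ℚ (⟨x, hx⟩ : E) := IsIntegral.of_finite ℚ _
  have hxint : IsIntegral ℚ x := by
    have := hxi.map E.val
    simpa using this
  refine ⟨hxint, ?_⟩
  rw [← adjoin.finrank hxint]
  have hle : ℚ⟮x⟯ ≤ E := by
    rw [adjoin_le_iff]
    intro y hy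
    rw [Set.mem_singleton_iff] at hy
    subst hy; exact hx
  haveI : Module.Finite ℚ E.toSubalgebra.toSubmodule := ‹FiniteDimensional ℚ E›
  exact Submodule.finrank_mono
    (show ℚ⟮x⟯.toSubalgebra.toSubmodule ≤ E.toSubalgebra.toSubmodule from hle)

/-! ### Finiteness of bounded-denominator rationals and angles -/

private lemma T_finite (N : ℕ) : Set.Finite {q : ℚ | q.den ≤ N ∧ 0 < q ∧ q ≤ 1} := by
  apply Set.Finite.subset (((Set.finite_Icc (0:ℕ) N).prod (Set.finite_Icc (0:ℕ) N)).image
    (fun p : ℕ × ℕ => (p.1 : ℚ) / p.2))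
  rintro q ⟨hden, hq0, hq1⟩
  have hnum0 : 0 < q.num := Rat.num_pos.mpr hq0
  have hdenpos : (0:ℚ) < (q.den : ℚ) := by exact_mod_cast q.pos
  have hle : q.num ≤ (q.den : ℤ) := by
    have h1 : (q.num : ℚ) / (q.den : ℚ) ≤ 1 := by rw [Rat.num_div_den]; exact hq1
    have h2 : (q.num : ℚ) ≤ (q.den : ℚ) := by
      rwa [div_le_one hdenpos] at h1
    exact_mod_cast h2
  refine ⟨(q.num.toNat, q.den), ⟨⟨by omega, by omega⟩, ⟨Nat.zero_le _, hden⟩⟩, ?_⟩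
  show ((q.num.toNat : ℚ)) / (q.den : ℚ) = q
  have h3 : (q.num.toNat : ℚ) = (q.num : ℚ) := by exact_mod_cast Int.toNat_of_nonneg hnum0.le
  rw [h3, Rat.num_div_den]

private lemma angle_mem (D : ℕ) (θ : ℝ) (hθ : θ ∈ Set.Ioo 0 π) (q : ℚ) (hq : θ = (q : ℝ) * π)
    (hint : IsIntegral ℚ (Real.cos θ)) (hdeg : (minpoly ℚ (Real.cos θ)).natDegree ≤ D) :
    ∃ r : ℚ, r.den ≤ 2 * (2 * D) ^ 2 ∧ 0 < r ∧ r ≤ 1 ∧ θ = (r : ℝ) * (2 * π) := by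
  obtain ⟨hθ0, hθπ⟩ := hθ
  have hπ : (0:ℝ) < π := Real.pi_pos
  have hq0 : 0 < q := by
    by_contra h
    push_neg at h
    have : (q : ℝ) ≤ 0 := by exact_mod_cast h
    nlinarith [hq ▸ hθ0]
  set r : ℚ := q / 2 with hr
  have hr0 : 0 < r := by positivity
  have hrθ : θ = (r : ℝ) * (2 * π) := by
    rw [hq, hr]; push_cast; ring
  have hq1 : q < 1 := by
    by_contra h
    push_neg at h
    have : (1:ℝ) ≤ (q:ℝ) := by exact_mod_cast h
    nlinarith [hq ▸ hθπ]
  have hr1 : r ≤ 1 := by rw [hr]; linarith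
  refine ⟨r, ?_, hr0, hr1, hrθ⟩
  have hint' : IsIntegral ℚ (Real.cos ((r : ℝ) * (2 * π))) := by rwa [← hrθ]
  have hkey := totient_le_of_cos r hr0 hint'
  rw [← hrθ] at hkey
  have h1 : r.den ≤ 2 * r.den.totient ^ 2 := le_two_mul_totient_sq r.den r.pos
  have h2 : r.den.totient ≤ 2 * D := hkey.trans (by omega)
  calc r.den ≤ 2 * r.den.totient ^ 2 := h1
    _ ≤ 2 * (2 * D) ^ 2 := by
        exact Nat.mul_le_mul_left 2 (Nat.pow_le_pow_left h2 2)

/-! ### Main theorem -/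

theorem finitely_many_rational_angled_similarity_types (d : ℕ) (hd : 0 < d) :
    Set.Finite {s : Multiset ℝ | ∃ α β γ a b c : ℝ,
      s = {α, β, γ} ∧
      α ∈ Set.Ioo 0 π ∧ β ∈ Set.Ioo 0 π ∧ γ ∈ Set.Ioo 0 π ∧
      α + β + γ = π ∧
      (∃ q : ℚ, α = (q : ℝ) * π) ∧ (∃ q : ℚ, β = (q : ℝ) * π) ∧
      (∃ q : ℚ, γ = (q : ℝ) * π) ∧
      0 < a ∧ 0 < b ∧ 0 < c ∧
      c ^ 2 = a ^ 2 + b ^ 2 - 2 * a * b * Real.cos γ ∧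
      a ^ 2 = b ^ 2 + c ^ 2 - 2 * b * c * Real.cos α ∧
      b ^ 2 = c ^ 2 + a ^ 2 - 2 * c * a * Real.cos β ∧
      IsAlgebraic ℚ a ∧ IsAlgebraic ℚ b ∧ IsAlgebraic ℚ c ∧
      (minpoly ℚ a).natDegree ≤ d ∧ (minpoly ℚ b).natDegree ≤ d ∧
      (minpoly ℚ c).natDegree ≤ d} := by
  set D := d * d * d with hD
  set N := 2 * (2 * D) ^ 2 with hN
  set T := {q : ℚ | q.den ≤ N ∧ 0 < q ∧ q ≤ 1} with hT
  set S := (fun q : ℚ => (q : ℝ) * (2 * π)) '' T with hS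
  have hSfin : S.Finite := (T_finite N).image _
  apply Set.Finite.subset ((hSfin.prod (hSfin.prod hSfin)).image
    (fun p : ℝ × ℝ × ℝ => ({p.1, p.2.1, p.2.2} : Multiset ℝ)))
  rintro s ⟨α, β, γ, a, b, c, rfl, hα, hβ, hγ, hsum, ⟨qα, hqα⟩, ⟨qβ, hqβ⟩, ⟨qγ, hqγ⟩,
    ha0, hb0, hc0, hlc, hla, hlb, haalg, hbalg, hcalg, hdega, hdegb, hdegc⟩
  obtain ⟨E, haE, hbE, hcE, hFD, hfr⟩ := exists_field d a b c haalg hbalg hcalg hdega hdegb hdegc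
  have h2E : (2:ℝ) ∈ E := by
    have h := add_mem E.one_mem E.one_mem
    rw [one_add_one_eq_two] at h
    exact h
  have hcosγ : Real.cos γ = (a^2 + b^2 - c^2) / (2*a*b) := by
    field_simp
    linarith
  have hcosα : Real.cos α = (b^2 + c^2 - a^2) / (2*b*c) := by
    field_simp
    linarith
  have hcosβ : Real.cos β = (c^2 + a^2 - b^2) / (2*c*a) := by
    field_simp
    linarith
  have hmemγ : Real.cos γ ∈ E := by
    rw [hcosγ]
    exact div_mem (sub_mem (add_mem (pow_mem haE 2) (pow_mem hbE 2)) (pow_mem hcE 2))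
      (mul_mem (mul_mem h2E haE) hbE)
  have hmemα : Real.cos α ∈ E := by
    rw [hcosα]
    exact div_mem (sub_mem (add_mem (pow_mem hbE 2) (pow_mem hcE 2)) (pow_mem haE 2))
      (mul_mem (mul_mem h2E hbE) hcE)
  have hmemβ : Real.cos β ∈ E := by
    rw [hcosβ]
    exact div_mem (sub_mem (add_mem (pow_mem hcE 2) (pow_mem haE 2)) (pow_mem hbE 2))
      (mul_mem (mul_mem h2E hcE) haE)
  have hSmem : ∀ θ : ℝ, θ ∈ Set.Ioo 0 π → (∃ q : ℚ, θ = (q : ℝ) * π) →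
      Real.cos θ ∈ E → θ ∈ S := by
    rintro θ hθ ⟨q, hq⟩ hmem
    obtain ⟨hint, hdeg⟩ := deg_le_of_mem hmem
    obtain ⟨r, hrden, hr0, hr1, hrθ⟩ := angle_mem D θ hθ q hq hint (hdeg.trans hfr)
    exact ⟨r, ⟨hrden, hr0, hr1⟩, hrθ.symm⟩
  exact ⟨(α, β, γ), ⟨hSmem α hα ⟨qα, hqα⟩ hmemα,
    hSmem β hβ ⟨qβ, hqβ⟩ hmemβ, hSmem γ hγ ⟨qγ, hqγ⟩ hmemγ⟩, rfl⟩
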